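/- Let d ≥ 1 be an integer, n real, ε > 0, and let u be C² on [−1,1]. With L_{ε,n} f = (1−z²)f'' − ℓ_{ε,n} f' where ℓ_{ε,n}(z) = z(n − ε(n−d)/(1+ε−z²)), and dν_{ε,n} = Z_{ε,n}^{-1}(1+ε−z²)^{(n−d)/2} dν_d: ∫(L_{ε,n} u)² dν_{ε,n} = ∫|u''|²(1−z²)² dν_{ε,n} + n∫(1−z²)|u'|² dν_{ε,n} − ε(n−d)∫ (1+ε+z²)/(1+ε−z²)² · (1−z²)|u'|² dν_{ε,n}. -/

import Mathlib

open MeasureTheory Set Real Filter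
open scoped ENNReal Topology

theorem aux_B_int (d : ℕ) (hd : 1 ≤ d) :
    IntegrableOn (fun z : ℝ => (1 - z ^ 2) ^ (((d : ℝ) - 2) / 2)) (Ioo (-1 : ℝ) 1) := by
  set r : ℝ := ((d : ℝ) - 2) / 2 with hr
  rcases le_or_gt 2 d with h2 | h2
  · have hr0 : 0 ≤ r := by
      rw [hr]; have : (2:ℝ) ≤ d := by exact_mod_cast h2
      linarith
    have hc : Continuous fun z : ℝ => (1 - z ^ 2) ^ r := by
      apply continuous_iff_continuousAt.mpr
      intro x
      exact (Real.continuousAt_rpow_const _ _ (Or.inr hr0)).comp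
        (by continuity : Continuous fun z : ℝ => 1 - z ^ 2).continuousAt
    exact (hc.integrableOn_Icc (a := -1) (b := 1)).mono_set Ioo_subset_Icc_self
  · interval_cases d
    have hr' : r = -(1/2 : ℝ) := by norm_num [hr]
    rw [hr']
    have maj1 : IntegrableOn (fun z : ℝ => (1 - z) ^ (-(1/2) : ℝ)) (Ioo (-1 : ℝ) 1) := by
      have h0 : IntervalIntegrable (fun x : ℝ => x ^ (-(1/2) : ℝ)) volume 2 0 :=
        intervalIntegral.intervalIntegrable_rpow' (by norm_num)
      have h1 := h0.comp_sub_left 1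
      norm_num at h1
      rw [intervalIntegrable_iff_integrableOn_Ioc_of_le (by norm_num)] at h1
      exact h1.mono_set Ioo_subset_Ioc_self
    have maj2 : IntegrableOn (fun z : ℝ => (1 + z) ^ (-(1/2) : ℝ)) (Ioo (-1 : ℝ) 1) := by
      have h0 : IntervalIntegrable (fun x : ℝ => x ^ (-(1/2) : ℝ)) volume 0 2 :=
        intervalIntegral.intervalIntegrable_rpow' (by norm_num)
      have h1 := h0.comp_add_left 1
      norm_num at h1
      rw [intervalIntegrable_iff_integrableOn_Ioc_of_le (by norm_num)] at h1
      exact h1.mono_set Ioo_subset_Ioc_self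
    apply Integrable.mono' (maj1.add maj2)
    · apply (Measurable.aestronglyMeasurable ?_)
      exact (measurable_const.sub (measurable_id.pow_const 2)).pow measurable_const
    · filter_upwards [ae_restrict_mem measurableSet_Ioo] with z hz
      obtain ⟨hz1, hz2⟩ := hz
      have hb1 : (0:ℝ) < 1 - z := by linarith
      have hb2 : (0:ℝ) < 1 + z := by linarith
      have hfac : (1 : ℝ) - z ^ 2 = (1 - z) * (1 + z) := by ring
      have hpos : (0:ℝ) < 1 - z ^ 2 := by rw [hfac]; positivity
      rw [Real.norm_of_nonneg (rpow_nonneg hpos.le _), hfac,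
        Real.mul_rpow hb1.le hb2.le]
      rcases le_or_gt 0 z with hz0 | hz0
      · have : (1 + z) ^ (-(1/2) : ℝ) ≤ 1 := by
          exact Real.rpow_le_one_of_one_le_of_nonpos (by linarith) (by norm_num)
        calc (1 - z) ^ (-(1/2):ℝ) * (1 + z) ^ (-(1/2):ℝ)
            ≤ (1 - z) ^ (-(1/2):ℝ) * 1 := by
              apply mul_le_mul_of_nonneg_left this (rpow_nonneg hb1.le _)
          _ ≤ (1 - z) ^ (-(1/2):ℝ) + (1 + z) ^ (-(1/2):ℝ) := by
              have := rpow_nonneg hb2.le (-(1/2):ℝ); linarith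
      · have : (1 - z) ^ (-(1/2) : ℝ) ≤ 1 := by
          exact Real.rpow_le_one_of_one_le_of_nonpos (by linarith) (by norm_num)
        calc (1 - z) ^ (-(1/2):ℝ) * (1 + z) ^ (-(1/2):ℝ)
            ≤ 1 * (1 + z) ^ (-(1/2):ℝ) := by
              apply mul_le_mul_of_nonneg_right this (rpow_nonneg hb2.le _)
          _ ≤ (1 - z) ^ (-(1/2):ℝ) + (1 + z) ^ (-(1/2):ℝ) := by
              have := rpow_nonneg hb1.le (-(1/2):ℝ); linarith

theorem aux_cW_int (d : ℕ) (hd : 1 ≤ d) (n ε : ℝ) (hε : 0 < ε)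
    (c : ℝ → ℝ) (hc : ContinuousOn c (Icc (-1 : ℝ) 1)) :
    IntegrableOn (fun z : ℝ => c z *
      ((1 + ε - z ^ 2) ^ ((n - d) / 2) * (1 - z ^ 2) ^ (((d : ℝ) - 2) / 2)))
      (Ioo (-1 : ℝ) 1) := by
  have hApos : ∀ z ∈ Icc (-1 : ℝ) 1, (0:ℝ) < 1 + ε - z ^ 2 := by
    intro z hz
    nlinarith [hz.1, hz.2]
  have hcA : ContinuousOn (fun z : ℝ => c z * (1 + ε - z ^ 2) ^ ((n - d) / 2))
      (Icc (-1 : ℝ) 1) := by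
    apply hc.mul
    apply ContinuousOn.rpow_const
    · exact (continuous_const.sub (continuous_pow 2)).continuousOn
    · intro z hz; exact Or.inl (hApos z hz).ne'
  obtain ⟨C, hC⟩ := IsCompact.exists_bound_of_continuousOn isCompact_Icc hcA
  have hmeas : AEStronglyMeasurable (fun z : ℝ => c z * (1 + ε - z ^ 2) ^ ((n - d) / 2))
      ((volume : Measure ℝ).restrict (Ioo (-1) 1)) :=
    (hcA.mono Ioo_subset_Icc_self).aestronglyMeasurable measurableSet_Ioo
  have key := Integrable.bdd_mul (c := C) (aux_B_int d hd) hmeas ?_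
  · apply key.congr
    filter_upwards with z
    ring
  · filter_upwards [ae_restrict_mem measurableSet_Ioo] with z hz
    exact hC z (Ioo_subset_Icc_self hz)

theorem aux_Z_pos (d : ℕ) (hd : 1 ≤ d) (n ε : ℝ) (hε : 0 < ε) :
    0 < ∫ z in Icc (-1 : ℝ) 1,
      (1 + ε - z ^ 2) ^ ((n - d) / 2) * (1 - z ^ 2) ^ (((d : ℝ) - 2) / 2) := by
  have hint : IntegrableOn (fun z : ℝ =>
      (1 + ε - z ^ 2) ^ ((n - d) / 2) * (1 - z ^ 2) ^ (((d : ℝ) - 2) / 2))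
      (Ioo (-1 : ℝ) 1) := by
    have := aux_cW_int d hd n ε hε (fun _ => 1) continuousOn_const
    simpa using this
  rw [MeasureTheory.integral_Icc_eq_integral_Ioo]
  have h0 : 0 ≤ᶠ[ae (volume.restrict (Ioo (-1:ℝ) 1))] fun z : ℝ =>
      (1 + ε - z ^ 2) ^ ((n - d) / 2) * (1 - z ^ 2) ^ (((d : ℝ) - 2) / 2) := by
    filter_upwards [ae_restrict_mem measurableSet_Ioo] with z hz
    have h1 : (0:ℝ) < 1 - z ^ 2 := by nlinarith [hz.1, hz.2]
    have h2 : (0:ℝ) < 1 + ε - z ^ 2 := by nlinarith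
    exact (mul_pos (rpow_pos_of_pos h2 _) (rpow_pos_of_pos h1 _)).le
  rw [setIntegral_pos_iff_support_of_nonneg_ae h0 hint]
  · have hsub : Ioo (-1 : ℝ) 1 ⊆ Function.support (fun z : ℝ =>
        (1 + ε - z ^ 2) ^ ((n - d) / 2) * (1 - z ^ 2) ^ (((d : ℝ) - 2) / 2)) ∩ Ioo (-1) 1 := by
      intro z hz
      refine ⟨?_, hz⟩
      have h1 : (0:ℝ) < 1 - z ^ 2 := by nlinarith [hz.1, hz.2]
      have h2 : (0:ℝ) < 1 + ε - z ^ 2 := by nlinarith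
      exact (mul_pos (rpow_pos_of_pos h2 _) (rpow_pos_of_pos h1 _)).ne'
    calc (0 : ℝ≥0∞) < volume (Ioo (-1 : ℝ) 1) := by simp
      _ ≤ _ := measure_mono hsub

theorem aux_conv (d : ℕ) (hd : 1 ≤ d) (n ε : ℝ) (hε : 0 < ε) (Z : ℝ) (hZpos : 0 < Z)
    (g : ℝ → ℝ) :
    ∫ z, g z ∂((volume.restrict (Icc (-1:ℝ) 1)).withDensity
      (fun z => ENNReal.ofReal
        ((1 + ε - z ^ 2) ^ ((n - d) / 2) * (1 - z ^ 2) ^ (((d : ℝ) - 2) / 2) / Z)))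
      = (∫ z in Ioo (-1:ℝ) 1, g z *
          ((1 + ε - z ^ 2) ^ ((n - d) / 2) * (1 - z ^ 2) ^ (((d : ℝ) - 2) / 2))) / Z := by
  set W : ℝ → ℝ := fun z =>
    (1 + ε - z ^ 2) ^ ((n - d) / 2) * (1 - z ^ 2) ^ (((d : ℝ) - 2) / 2) with hW
  have hWmeas : Measurable W := by
    apply Measurable.mul
    · exact (measurable_const.sub (measurable_id.pow_const 2)).pow measurable_const
    · exact (measurable_const.sub (measurable_id.pow_const 2)).pow measurable_const
  have hmeas : Measurable fun z => (W z / Z).toNNReal :=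
    (hWmeas.div_const Z).real_toNNReal
  have hid : (fun z => ENNReal.ofReal (W z / Z))
      = fun z => ((W z / Z).toNNReal : ℝ≥0∞) := rfl
  rw [hid, integral_withDensity_eq_integral_smul hmeas]
  rw [MeasureTheory.integral_Icc_eq_integral_Ioo]
  rw [show (∫ z in Ioo (-1:ℝ) 1, g z * W z) / Z = ∫ z in Ioo (-1:ℝ) 1, g z * W z / Z by
    rw [integral_div]]
  apply setIntegral_congr_fun measurableSet_Ioo
  intro z hz
  have h1 : (0:ℝ) < 1 - z ^ 2 := by nlinarith [hz.1, hz.2]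
  have h2 : (0:ℝ) < 1 + ε - z ^ 2 := by nlinarith
  have hWpos : 0 < W z := mul_pos (rpow_pos_of_pos h2 _) (rpow_pos_of_pos h1 _)
  have hnn : 0 ≤ W z / Z := by positivity
  simp only [NNReal.smul_def, Real.coe_toNNReal _ hnn, smul_eq_mul]
  ring

theorem aux_main (d : ℕ) (hd : 1 ≤ d) (n ε : ℝ) (hε : 0 < ε)
    (u : ℝ → ℝ) (hu : ContDiff ℝ 2 u)
    (ℓ : ℝ → ℝ) (hℓ : ∀ z, ℓ z = z * (n - ε * (n - d) / (1 + ε - z ^ 2))) :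
    (∫ z in Ioo (-1:ℝ) 1, ((1 - z ^ 2) * deriv (deriv u) z - ℓ z * deriv u z) ^ 2 *
        ((1 + ε - z ^ 2) ^ ((n - d) / 2) * (1 - z ^ 2) ^ (((d : ℝ) - 2) / 2)))
      = (∫ z in Ioo (-1:ℝ) 1, (deriv (deriv u) z) ^ 2 * (1 - z ^ 2) ^ 2 *
          ((1 + ε - z ^ 2) ^ ((n - d) / 2) * (1 - z ^ 2) ^ (((d : ℝ) - 2) / 2)))
        + n * (∫ z in Ioo (-1:ℝ) 1, (1 - z ^ 2) * (deriv u z) ^ 2 *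
          ((1 + ε - z ^ 2) ^ ((n - d) / 2) * (1 - z ^ 2) ^ (((d : ℝ) - 2) / 2)))
        - ε * (n - d) * (∫ z in Ioo (-1:ℝ) 1,
            (1 + ε + z ^ 2) / (1 + ε - z ^ 2) ^ 2 * ((1 - z ^ 2) * (deriv u z) ^ 2) *
          ((1 + ε - z ^ 2) ^ ((n - d) / 2) * (1 - z ^ 2) ^ (((d : ℝ) - 2) / 2))) := by
  have hle : ℓ = fun z => z * (n - ε * (n - d) / (1 + ε - z ^ 2)) := funext hℓ
  subst hle
  -- smoothness of u
  have hu2 : ContDiff ℝ ((1 : WithTop ℕ∞) + 1) u := by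
    convert hu using 2
    exact one_add_one_eq_two
  have hu' : ContDiff ℝ 1 (deriv u) := (contDiff_succ_iff_deriv.mp hu2).2.2
  have hu1diff : Differentiable ℝ (deriv u) := hu'.differentiable one_ne_zero
  have hu1cont : Continuous (deriv u) := hu1diff.continuous
  have hu2cont : Continuous (deriv (deriv u)) := hu'.continuous_deriv le_rfl
  -- notation
  set W : ℝ → ℝ := fun z =>
    (1 + ε - z ^ 2) ^ ((n - d) / 2) * (1 - z ^ 2) ^ (((d : ℝ) - 2) / 2) with hWdef
  set c0 : ℝ → ℝ := fun z =>
    ((1 - z ^ 2) * deriv (deriv u) z - (z * (n - ε * (n - d) / (1 + ε - z ^ 2))) * deriv u z) ^ 2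
    with hc0def
  set c1 : ℝ → ℝ := fun z => (deriv (deriv u) z) ^ 2 * (1 - z ^ 2) ^ 2 with hc1def
  set c2 : ℝ → ℝ := fun z => (1 - z ^ 2) * (deriv u z) ^ 2 with hc2def
  set c3 : ℝ → ℝ := fun z =>
    (1 + ε + z ^ 2) / (1 + ε - z ^ 2) ^ 2 * ((1 - z ^ 2) * (deriv u z) ^ 2) with hc3def
  -- positivity on Icc
  have hpos2 : ∀ z ∈ Icc (-1:ℝ) 1, (0:ℝ) < 1 + ε - z ^ 2 := by
    intro z hz; nlinarith [hz.1, hz.2]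
  -- continuity of the coefficient functions on Icc
  have hcden : ContinuousOn (fun z : ℝ => 1 + ε - z ^ 2) (Icc (-1:ℝ) 1) :=
    (continuous_const.sub (continuous_pow 2)).continuousOn
  have hcnum : ContinuousOn (fun z : ℝ => 1 - z ^ 2) (Icc (-1:ℝ) 1) :=
    (continuous_const.sub (continuous_pow 2)).continuousOn
  have hℓcont : ContinuousOn (fun z : ℝ => z * (n - ε * (n - d) / (1 + ε - z ^ 2)))
      (Icc (-1:ℝ) 1) := by
    apply continuousOn_id.mul
    apply continuousOn_const.sub
    exact continuousOn_const.div hcden (fun z hz => (hpos2 z hz).ne')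
  have hc0cont : ContinuousOn c0 (Icc (-1:ℝ) 1) := by
    rw [hc0def]
    exact ((hcnum.mul hu2cont.continuousOn).sub (hℓcont.mul hu1cont.continuousOn)).pow 2
  have hc1cont : ContinuousOn c1 (Icc (-1:ℝ) 1) := by
    rw [hc1def]
    exact (hu2cont.continuousOn.pow 2).mul (hcnum.pow 2)
  have hc2cont : ContinuousOn c2 (Icc (-1:ℝ) 1) := by
    rw [hc2def]
    exact hcnum.mul (hu1cont.continuousOn.pow 2)
  have hc3cont : ContinuousOn c3 (Icc (-1:ℝ) 1) := by
    rw [hc3def]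
    apply ContinuousOn.mul
    · apply ContinuousOn.div ((continuous_const.add (continuous_pow 2)).continuousOn) (hcden.pow 2)
      intro z hz; exact (pow_ne_zero 2 (hpos2 z hz).ne')
    · exact hcnum.mul (hu1cont.continuousOn.pow 2)
  -- integrability
  have I0 : IntegrableOn (fun z => c0 z * W z) (Ioo (-1:ℝ) 1) := aux_cW_int d hd n ε hε c0 hc0cont
  have I1 : IntegrableOn (fun z => c1 z * W z) (Ioo (-1:ℝ) 1) := aux_cW_int d hd n ε hε c1 hc1cont
  have I2 : IntegrableOn (fun z => c2 z * W z) (Ioo (-1:ℝ) 1) := aux_cW_int d hd n ε hε c2 hc2cont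
  have I3 : IntegrableOn (fun z => c3 z * W z) (Ioo (-1:ℝ) 1) := aux_cW_int d hd n ε hε c3 hc3cont
  -- the total derivative G and the primitive H
  set G : ℝ → ℝ := fun z => (c1 z + n * c2 z - ε * (n - d) * c3 z - c0 z) * W z with hGdef
  set H : ℝ → ℝ := fun z => (1 - z ^ 2) * ((z * (n - ε * (n - d) / (1 + ε - z ^ 2))) *
      ((deriv u z) ^ 2 * W z)) with hHdef
  have hH : ∀ z ∈ Ioo (-1:ℝ) 1, HasDerivAt H (G z) z := by
    intro z hz
    obtain ⟨hz1, hz2⟩ := hz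
    have h1 : (0:ℝ) < 1 - z ^ 2 := by nlinarith
    have h2 : (0:ℝ) < 1 + ε - z ^ 2 := by nlinarith
    have hin1 : HasDerivAt (fun z : ℝ => 1 + ε - z ^ 2) (-(2 * z)) z := by
      simpa using (hasDerivAt_pow 2 z).const_sub (1 + ε)
    have hin2 : HasDerivAt (fun z : ℝ => 1 - z ^ 2) (-(2 * z)) z := by
      simpa using (hasDerivAt_pow 2 z).const_sub 1
    have hA := hin1.rpow_const (p := (n - d) / 2) (Or.inl h2.ne')
    have hB := hin2.rpow_const (p := ((d : ℝ) - 2) / 2) (Or.inl h1.ne')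
    have hW := hA.mul hB
    have hq := ((hasDerivAt_const z (ε * (n - (d:ℝ)))).div hin1 h2.ne').const_sub n
    have hQ := (hasDerivAt_id z).mul hq
    have hS := ((hu1diff z).hasDerivAt).pow 2
    have hfull := hin2.mul (hQ.mul (hS.mul hW))
    convert hfull using 1
    case e'_4 => rfl
    case e'_5 => rfl
    case e'_8 => rfl
    rw [hGdef, hc0def, hc1def, hc2def, hc3def, hWdef]
    simp only [Pi.mul_apply, Pi.div_apply, Pi.pow_apply, id_eq, Nat.cast_ofNat, Nat.reduceSub, pow_one]
    rw [Real.rpow_sub_one h2.ne', Real.rpow_sub_one h1.ne']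
    field_simp
    ring
  -- limits of H at the endpoints
  have hWlim : ∀ a ∈ ({-1, 1} : Set ℝ), Tendsto H (𝓝[Ioo (-1:ℝ) 1] a) (𝓝 0) := by
    intro a ha
    have hd2 : (0:ℝ) < 1 + ((d:ℝ) - 2) / 2 := by
      have : (1:ℝ) ≤ d := by exact_mod_cast hd
      linarith
    have ha2 : a ^ 2 = 1 := by rcases ha with h | h <;> simp_all
    -- H z = (1 - z^2) ^ (1 + r) * ψ z on Ioo
    have hφ : Tendsto (fun z : ℝ => (1 - z ^ 2) ^ (1 + ((d:ℝ) - 2) / 2))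
        (𝓝[Ioo (-1:ℝ) 1] a) (𝓝 0) := by
      have hbase : Tendsto (fun z : ℝ => 1 - z ^ 2) (𝓝[Ioo (-1:ℝ) 1] a) (𝓝 0) := by
        have h0 : Tendsto (fun z : ℝ => 1 - z ^ 2) (𝓝 a) (𝓝 (1 - a ^ 2)) :=
          ((continuous_const.sub (continuous_pow 2)).tendsto a)
        rw [ha2] at h0
        simpa using h0.mono_left (nhdsWithin_le_nhds (s := Ioo (-1:ℝ) 1))
      have hcont : ContinuousAt (fun t : ℝ => t ^ (1 + ((d:ℝ) - 2) / 2)) 0 :=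
        Real.continuousAt_rpow_const 0 _ (Or.inr hd2.le)
      have := hcont.tendsto.comp hbase
      simpa [Real.zero_rpow hd2.ne', Function.comp_def] using this
    have hψ : Tendsto (fun z : ℝ => (z * (n - ε * (n - d) / (1 + ε - z ^ 2))) *
        ((deriv u z) ^ 2 * (1 + ε - z ^ 2) ^ ((n - d) / 2)))
        (𝓝[Ioo (-1:ℝ) 1] a)
        (𝓝 ((a * (n - ε * (n - d) / (1 + ε - a ^ 2))) *
          ((deriv u a) ^ 2 * (1 + ε - a ^ 2) ^ ((n - d) / 2)))) := by
      apply Filter.Tendsto.mono_left _ (nhdsWithin_le_nhds)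
      apply ContinuousAt.tendsto
      have hden : (1:ℝ) + ε - a ^ 2 ≠ 0 := by rw [ha2]; simpa using hε.ne'
      apply ContinuousAt.mul
      · exact continuousAt_id.mul (continuousAt_const.sub
          (continuousAt_const.div ((continuous_const.sub (continuous_pow 2)).continuousAt) hden))
      · apply ContinuousAt.mul ((hu1cont.continuousAt).pow 2)
        exact ((continuous_const.sub (continuous_pow 2)).continuousAt).rpow_const (Or.inl hden)
    have hmul := hφ.mul hψ
    rw [zero_mul] at hmul
    apply hmul.congr'
    filter_upwards [self_mem_nhdsWithin] with z hz
    obtain ⟨hz1, hz2⟩ := hz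
    have h1 : (0:ℝ) < 1 - z ^ 2 := by nlinarith
    rw [hHdef, hWdef]
    simp only []
    rw [Real.rpow_add h1, Real.rpow_one]
    ring
  -- ∫ G = 0
  have hGint0 : IntegrableOn G (Ioo (-1:ℝ) 1) := by
    have : IntegrableOn (fun z => (c1 z + n * c2 z - ε * (n - d) * c3 z - c0 z) * W z)
        (Ioo (-1:ℝ) 1) :=
      aux_cW_int d hd n ε hε _ (((hc1cont.add (hc2cont.const_smul n)).sub
        (hc3cont.const_smul (ε * (n - d)))).sub hc0cont)
    exact this
  have hGzero : (∫ z in Ioo (-1:ℝ) 1, G z) = 0 := by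
    have hiint : IntervalIntegrable G volume (-1 : ℝ) 1 := by
      rw [intervalIntegrable_iff_integrableOn_Ioo_of_le (by norm_num)]
      exact hGint0
    have hta : Tendsto H (𝓝[>] (-1:ℝ)) (𝓝 0) := by
      refine (hWlim (-1) (by simp)).mono_left ?_
      rw [← nhdsWithin_Ioo_eq_nhdsGT (by norm_num : (-1:ℝ) < 1)]
    have htb : Tendsto H (𝓝[<] (1:ℝ)) (𝓝 0) := by
      refine (hWlim 1 (by simp)).mono_left ?_
      rw [← nhdsWithin_Ioo_eq_nhdsLT (by norm_num : (-1:ℝ) < 1)]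
    have := intervalIntegral.integral_eq_sub_of_hasDerivAt_of_tendsto
      (by norm_num : (-1:ℝ) < 1) hH hiint hta htb
    rw [intervalIntegral.integral_of_le (by norm_num : (-1:ℝ) ≤ 1),
      MeasureTheory.integral_Ioc_eq_integral_Ioo] at this
    simpa using this
  -- expand ∫ G and conclude
  have hsplit : (∫ z in Ioo (-1:ℝ) 1, G z)
      = (∫ z in Ioo (-1:ℝ) 1, c1 z * W z) + n * (∫ z in Ioo (-1:ℝ) 1, c2 z * W z)
        - ε * (n - d) * (∫ z in Ioo (-1:ℝ) 1, c3 z * W z)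
        - (∫ z in Ioo (-1:ℝ) 1, c0 z * W z) := by
    have hGeq : G = fun z => (c1 z * W z + n * (c2 z * W z) - ε * (n - d) * (c3 z * W z))
        - c0 z * W z := by
      funext z; rw [hGdef]; ring
    have h2 : Integrable (fun z => n * (c2 z * W z))
        (volume.restrict (Ioo (-1:ℝ) 1)) := I2.const_mul n
    have h3 : Integrable (fun z => ε * (n - d) * (c3 z * W z))
        (volume.restrict (Ioo (-1:ℝ) 1)) := I3.const_mul (ε * (n - d))
    have h12 : Integrable (fun z => c1 z * W z + n * (c2 z * W z))
        (volume.restrict (Ioo (-1:ℝ) 1)) := by exact I1.add h2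
    have h123 : Integrable (fun z => c1 z * W z + n * (c2 z * W z) - ε * (n - d) * (c3 z * W z))
        (volume.restrict (Ioo (-1:ℝ) 1)) := by exact h12.sub h3
    rw [hGeq, integral_sub h123 I0, integral_sub h12 h3, integral_add I1 h2,
      integral_const_mul, integral_const_mul]
  rw [hGzero] at hsplit
  linarith [hsplit]

theorem stmt_16 (d : ℕ) (hd : 1 ≤ d) (n ε : ℝ) (hε : 0 < ε)
    (Z : ℝ)
    (hZ : Z = ∫ z in Set.Icc (-1 : ℝ) 1,
      (1 + ε - z ^ 2) ^ ((n - d) / 2) * (1 - z ^ 2) ^ (((d : ℝ) - 2) / 2))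
    (ν : Measure ℝ)
    (hν : ν = (volume.restrict (Set.Icc (-1 : ℝ) 1)).withDensity
      (fun z => ENNReal.ofReal
        ((1 + ε - z ^ 2) ^ ((n - d) / 2) * (1 - z ^ 2) ^ (((d : ℝ) - 2) / 2) / Z)))
    (u : ℝ → ℝ) (hu : ContDiff ℝ 2 u)
    (ℓ : ℝ → ℝ) (hℓ : ∀ z, ℓ z = z * (n - ε * (n - d) / (1 + ε - z ^ 2))) :
    ∫ z, ((1 - z ^ 2) * deriv (deriv u) z - ℓ z * deriv u z) ^ 2 ∂ν
      = ∫ z, (deriv (deriv u) z) ^ 2 * (1 - z ^ 2) ^ 2 ∂ν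
        + n * ∫ z, (1 - z ^ 2) * (deriv u z) ^ 2 ∂ν
        - ε * (n - d) * ∫ z,
            (1 + ε + z ^ 2) / (1 + ε - z ^ 2) ^ 2 * ((1 - z ^ 2) * (deriv u z) ^ 2) ∂ν := by
  have hZpos : 0 < Z := by rw [hZ]; exact aux_Z_pos d hd n ε hε
  subst hν
  rw [aux_conv d hd n ε hε Z hZpos
      (fun z => ((1 - z ^ 2) * deriv (deriv u) z - ℓ z * deriv u z) ^ 2),
    aux_conv d hd n ε hε Z hZpos
      (fun z => (deriv (deriv u) z) ^ 2 * (1 - z ^ 2) ^ 2),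
    aux_conv d hd n ε hε Z hZpos
      (fun z => (1 - z ^ 2) * (deriv u z) ^ 2),
    aux_conv d hd n ε hε Z hZpos
      (fun z => (1 + ε + z ^ 2) / (1 + ε - z ^ 2) ^ 2 * ((1 - z ^ 2) * (deriv u z) ^ 2))]
  rw [aux_main d hd n ε hε u hu ℓ hℓ]
  field_simp
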